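/- Let S be a finite nonempty set partitioned into nonempty disjoint subsets S = T_1 ∪ T_2 ∪ ⋯ ∪ T_L, and on ℝ^S define the generalized Schinzel norm ∇(x) = Σ_{ℓ=1}^L δ(π_{T_ℓ}(x)), where δ(y) = (1/2)|Σ_{s∈S} y_s| + (1/2)Σ_{s∈S} |y_s| and π_{T_ℓ} is the coordinate projection onto the subspace of vectors supported on T_ℓ. Then ∇ is a norm on ℝ^S, and its closed unit ball K_∇ = {x ∈ ℝ^S : ∇(x) ≤ 1} satisfies 2^{|S|}/|S|! ≤ Vol_S(K_∇) ≤ (2|S|)!/(|S|!)^3, where Vol_S is Lebesgue measure on ℝ^S. -/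
import Mathlib

open MeasureTheory
open scoped ENNReal
set_option linter.unusedSectionVars false
namespace AV
variable {ι : Type*} [Fintype ι] [DecidableEq ι]

lemma sum_choose_sq (n : ℕ) : ∑ j ∈ Finset.range (n+1), (n.choose j)^2 = (2*n).choose n := by
  have h := Nat.add_choose_eq n n n
  rw [Finset.Nat.sum_antidiagonal_eq_sum_range_succ_mk] at h
  rw [two_mul, h]
  refine Finset.sum_congr rfl fun j hj => ?_
  rw [Nat.choose_symm (Nat.lt_succ_iff.mp (Finset.mem_range.mp hj)), sq]

lemma sum_real_id (n : ℕ) :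
    ∑ j ∈ Finset.range (n+1), (n.choose j) • ((1 : ℝ)/(Nat.factorial j) * (1/(Nat.factorial (n-j)))) =
      ((2*n).factorial : ℝ) / ((n.factorial : ℝ))^3 := by
  have key : ∀ j ∈ Finset.range (n+1),
      (n.choose j) • ((1 : ℝ)/(Nat.factorial j) * (1/(Nat.factorial (n-j)))) =
        ((n.choose j : ℝ))^2 / (n.factorial : ℝ) := by
    intro j hj
    have hjn : j ≤ n := Nat.lt_succ_iff.mp (Finset.mem_range.mp hj)
    have h := Nat.choose_mul_factorial_mul_factorial hjn
    have h' : ((n.choose j : ℝ)) * (Nat.factorial j) * (Nat.factorial (n-j)) = (n.factorial : ℝ) := by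
      exact_mod_cast congrArg (Nat.cast (R := ℝ)) h
    have h1 : (Nat.factorial j : ℝ) ≠ 0 := Nat.cast_ne_zero.mpr (Nat.factorial_ne_zero j)
    have h2 : (Nat.factorial (n-j) : ℝ) ≠ 0 := Nat.cast_ne_zero.mpr (Nat.factorial_ne_zero _)
    have h3 : (Nat.factorial n : ℝ) ≠ 0 := Nat.cast_ne_zero.mpr (Nat.factorial_ne_zero n)
    rw [nsmul_eq_mul]
    field_simp
    nlinarith [h']
  rw [Finset.sum_congr rfl key, ← Finset.sum_div]
  have : ∑ j ∈ Finset.range (n+1), ((n.choose j : ℝ))^2 = ((2*n).choose n : ℝ) := by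
    rw [← sum_choose_sq n]
    push_cast
    rfl
  rw [this]
  have h := Nat.choose_mul_factorial_mul_factorial (Nat.le_mul_of_pos_left n (by norm_num) : n ≤ 2*n)
  have h2n : 2*n - n = n := by omega
  rw [h2n] at h
  have h' : ((2*n).choose n : ℝ) * (n.factorial : ℝ) * (n.factorial : ℝ) = ((2*n).factorial : ℝ) := by
    exact_mod_cast congrArg (Nat.cast (R := ℝ)) h
  have h3 : (Nat.factorial n : ℝ) ≠ 0 := Nat.cast_ne_zero.mpr (Nat.factorial_ne_zero n)
  field_simp
  nlinarith [h']

lemma volume_l1ball [Nonempty ι] :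
    volume {x : ι → ℝ | ∑ i, |x i| ≤ 1} =
      ENNReal.ofReal (2 ^ (Fintype.card ι) / (Fintype.card ι).factorial) := by
  have h := MeasureTheory.volume_sum_rpow_le (ι := ι) (p := 1) le_rfl 1
  simp only [Real.rpow_one, one_div_one, div_one] at h
  rw [show {x : ι → ℝ | ∑ i, |x i| ≤ 1} = {x : ι → ℝ | (∑ i, |x i|) ^ (1:ℝ) ≤ 1} by
    simp [Real.rpow_one]] at *
  rw [h]
  norm_num
  rw [Real.Gamma_nat_eq_factorial]

variable {ι : Type*} [Fintype ι] [DecidableEq ι]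

/-- The open orthant with positive coordinates in `E`, negative outside. -/
def orth (E : Finset ι) : Set (ι → ℝ) := {x | ∀ i, if i ∈ E then 0 < x i else x i < 0}

lemma mem_orth_iff {E : Finset ι} {x : ι → ℝ} :
    x ∈ orth E ↔ ∀ i, if i ∈ E then 0 < x i else x i < 0 := Iff.rfl

lemma measurableSet_orth (E : Finset ι) : MeasurableSet (orth E) := by
  have : orth E = ⋂ i, (fun x : ι → ℝ => x i) ⁻¹' (if i ∈ E then Set.Ioi 0 else Set.Iio 0) := by
    ext x
    simp only [orth, Set.mem_setOf_eq, Set.mem_iInter, Set.mem_preimage]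
    refine forall_congr' fun i => ?_
    by_cases hi : i ∈ E <;> simp [hi]
  rw [this]
  refine MeasurableSet.iInter fun i => (measurable_pi_apply i) ?_
  by_cases hi : i ∈ E <;> simp [hi, measurableSet_Ioi, measurableSet_Iio]

lemma orth_disjoint : Pairwise (Function.onFun Disjoint (orth (ι := ι))) := by
  intro E F hEF
  rw [Function.onFun, Set.disjoint_left]
  intro x hE hF
  apply hEF
  ext i
  have h1 := hE i; have h2 := hF i
  constructor <;> intro hi
  · by_contra hF'
    rw [if_pos hi] at h1; rw [if_neg hF'] at h2; linarith
  · by_contra hE'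
    rw [if_pos hi] at h2; rw [if_neg hE'] at h1; linarith

lemma volume_eq_sum_orth {A : Set (ι → ℝ)} (hA : MeasurableSet A) :
    volume A = ∑ E : Finset ι, volume (A ∩ orth E) := by
  classical
  set U : Set (ι → ℝ) := ⋃ E : Finset ι, orth E with hU
  have hnull : volume {x : ι → ℝ | ∃ i, x i = 0} = 0 := by
    have : {x : ι → ℝ | ∃ i, x i = 0} = ⋃ i, {x : ι → ℝ | x i = 0} := by ext x; simp
    rw [this]
    refine measure_iUnion_null fun i => ?_
    rw [MeasureTheory.volume_pi]
    exact Measure.pi_hyperplane _ i 0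
  have hsub : A \ U ⊆ {x | ∃ i, x i = 0} := by
    rintro x ⟨hxA, hx⟩
    by_contra h
    simp only [Set.mem_setOf_eq, not_exists] at h
    apply hx
    refine Set.mem_iUnion.2 ⟨Finset.univ.filter (fun i => 0 < x i), fun i => ?_⟩
    by_cases hi : 0 < x i
    · simp [hi]
    · simp only [Finset.mem_filter, Finset.mem_univ, hi, and_false, if_false]
      exact lt_of_le_of_ne (not_lt.mp hi) (h i)
  have h1 : volume A = volume (A ∩ U) := by
    refine le_antisymm ?_ (measure_mono Set.inter_subset_left)
    calc volume A ≤ volume (A ∩ U) + volume (A \ U) := measure_le_inter_add_diff _ _ _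
      _ = volume (A ∩ U) := by rw [measure_mono_null hsub hnull, add_zero]
  rw [h1, hU, Set.inter_iUnion, measure_iUnion ?_ ?_, tsum_fintype]
  · intro E F hEF
    exact (orth_disjoint hEF).mono Set.inter_subset_right Set.inter_subset_right
  · exact fun E => hA.inter (measurableSet_orth E)

/-- Reflection making all coordinates outside `E` flip sign. -/
def refl (E : Finset ι) (x : ι → ℝ) : ι → ℝ := fun i => if i ∈ E then x i else -x i

lemma measurePreserving_refl (E : Finset ι) :
    MeasurePreserving (refl E) volume volume := by
  have : refl E = fun (x : ι → ℝ) (i : ι) => (fun t : ℝ => if i ∈ E then t else -t) (x i) := by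
    funext x i; by_cases hi : i ∈ E <;> simp [refl, hi]
  have hf : ∀ i : ι, MeasurePreserving (fun t : ℝ => if i ∈ E then t else -t) volume volume := by
    intro i
    by_cases hi : i ∈ E
    · simp only [hi, if_true]
      exact MeasurePreserving.id _
    · simp only [hi, if_false]
      exact Measure.measurePreserving_neg _
  rw [this]
  exact MeasureTheory.volume_preserving_pi hf

lemma refl_mem_orth {E : Finset ι} {x : ι → ℝ} :
    refl E x ∈ orth E ↔ ∀ i, 0 < x i := by
  refine forall_congr' fun i => ?_
  by_cases hi : i ∈ E <;> simp [refl, hi]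

/-- The open standard simplex. -/
def simp0 (ι : Type*) [Fintype ι] : Set (ι → ℝ) := {x | (∀ i, 0 < x i) ∧ ∑ i, x i ≤ 1}

lemma measurableSet_simp0 : MeasurableSet (simp0 ι) := by
  have h1 : MeasurableSet {x : ι → ℝ | ∀ i, 0 < x i} := by
    have : {x : ι → ℝ | ∀ i, 0 < x i} = ⋂ i, (fun x : ι → ℝ => x i) ⁻¹' Set.Ioi 0 := by
      ext x; simp
    rw [this]
    exact MeasurableSet.iInter fun i => (measurable_pi_apply i) measurableSet_Ioi
  have h2 : MeasurableSet {x : ι → ℝ | ∑ i, x i ≤ 1} :=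
    measurableSet_le (Finset.measurable_sum _ fun i _ => measurable_pi_apply i) measurable_const
  exact h1.inter h2

lemma volume_simp0 : volume (simp0 ι) = ENNReal.ofReal (1 / (Fintype.card ι).factorial) := by
  classical
  cases isEmpty_or_nonempty ι with
  | inl h =>
    have : simp0 ι = Set.univ := by
      ext x
      simp [simp0, Finset.univ_eq_empty]
    rw [this, MeasureTheory.volume_pi, Measure.pi_univ]
    simp [Fintype.card_eq_zero]
  | inr h =>
    have hball : MeasurableSet {x : ι → ℝ | ∑ i, |x i| ≤ 1} :=
      measurableSet_le (Finset.measurable_sum _ fun i _ => (measurable_pi_apply i).abs)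
        measurable_const
    have hdec := volume_eq_sum_orth (ι := ι) hball
    have hpiece : ∀ E : Finset ι,
        volume ({x : ι → ℝ | ∑ i, |x i| ≤ 1} ∩ orth E) = volume (simp0 ι) := by
      intro E
      have hpre : refl E ⁻¹' ({x : ι → ℝ | ∑ i, |x i| ≤ 1} ∩ orth E) = simp0 ι := by
        ext x
        simp only [Set.mem_preimage, Set.mem_inter_iff, Set.mem_setOf_eq, simp0]
        constructor
        · rintro ⟨hsum, horth⟩
          have hpos : ∀ i, 0 < x i := refl_mem_orth.mp horth
          refine ⟨hpos, ?_⟩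
          calc ∑ i, x i = ∑ i, |refl E x i| := by
                refine Finset.sum_congr rfl fun i _ => ?_
                by_cases hi : i ∈ E <;> simp [refl, hi, abs_of_pos (hpos i)]
            _ ≤ 1 := hsum
        · rintro ⟨hpos, hsum⟩
          refine ⟨?_, refl_mem_orth.mpr hpos⟩
          calc ∑ i, |refl E x i| = ∑ i, x i := by
                refine Finset.sum_congr rfl fun i _ => ?_
                by_cases hi : i ∈ E <;> simp [refl, hi, abs_of_pos (hpos i)]
            _ ≤ 1 := hsum
      rw [← (measurePreserving_refl E).measure_preimage
        (hball.inter (measurableSet_orth E)).nullMeasurableSet, hpre]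
    rw [Finset.sum_congr rfl (fun E _ => hpiece E)] at hdec
    rw [Finset.sum_const, volume_l1ball, Finset.card_univ, Fintype.card_finset] at hdec
    have h2 : ((2:ℝ≥0∞) ^ Fintype.card ι) ≠ 0 := by positivity
    have h3 : ((2:ℝ≥0∞) ^ Fintype.card ι) ≠ ⊤ := by
      exact ENNReal.pow_ne_top (by norm_num)
    have : (2 ^ Fintype.card ι : ℝ≥0∞) * ENNReal.ofReal (1 / (Fintype.card ι).factorial)
        = 2 ^ Fintype.card ι • volume (simp0 ι) := by
      rw [← hdec]
      rw [show ((2:ℝ≥0∞) ^ Fintype.card ι) * ENNReal.ofReal (1 / (Fintype.card ι).factorial)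
          = ENNReal.ofReal (2 ^ Fintype.card ι * (1 / (Fintype.card ι).factorial)) by
        rw [ENNReal.ofReal_mul (by positivity)]
        congr 1
        rw [ENNReal.ofReal_pow (by norm_num)]
        norm_num]
      congr 1
      ring
    rw [nsmul_eq_mul, Nat.cast_pow, Nat.cast_ofNat] at this
    exact (ENNReal.mul_right_inj h2 h3).mp this.symm


/-- The key region: positive part sum and negative part sum both at most 1. -/
def Dset (ι : Type*) [Fintype ι] : Set (ι → ℝ) :=
  {x | (∑ i, max (x i) 0 ≤ 1) ∧ (∑ i, max (-x i) 0 ≤ 1)}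

lemma measurableSet_Dset : MeasurableSet (Dset ι) := by
  refine MeasurableSet.inter ?_ ?_
  · exact measurableSet_le (Finset.measurable_sum _ fun i _ =>
      (measurable_pi_apply i).max measurable_const) measurable_const
  · exact measurableSet_le (Finset.measurable_sum _ fun i _ =>
      (measurable_pi_apply i).neg.max measurable_const) measurable_const

lemma volume_PE (E : Finset ι) :
    volume {x : ι → ℝ | (∀ i, 0 < x i) ∧ (∑ i ∈ E, x i ≤ 1) ∧ (∑ i ∈ Eᶜ, x i ≤ 1)} =
      ENNReal.ofReal (1 / (E.card).factorial) *
        ENNReal.ofReal (1 / (Fintype.card ι - E.card).factorial) := by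
  classical
  have hmp := MeasureTheory.volume_preserving_piEquivPiSubtypeProd
    (fun _ : ι => ℝ) (fun i => i ∈ E)
  have hset : {x : ι → ℝ | (∀ i, 0 < x i) ∧ (∑ i ∈ E, x i ≤ 1) ∧ (∑ i ∈ Eᶜ, x i ≤ 1)} =
      (MeasurableEquiv.piEquivPiSubtypeProd (fun _ : ι => ℝ) (fun i => i ∈ E)) ⁻¹'
        ((@simp0 {i : ι // i ∈ E} (Subtype.fintype fun i => i ∈ E)) ×ˢ
          (@simp0 {i : ι // ¬ i ∈ E} (Subtype.fintype fun i => ¬ i ∈ E))) := by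
    ext x
    simp only [Set.mem_setOf_eq, Set.mem_preimage, Set.mem_prod,
      MeasurableEquiv.piEquivPiSubtypeProd, MeasurableEquiv.coe_mk,
      Equiv.piEquivPiSubtypeProd, Equiv.coe_fn_mk, simp0]
    have e1 := @Finset.sum_subtype ι ℝ _ (fun i => i ∈ E)
      (Subtype.fintype fun i => i ∈ E) E (fun i => Iff.rfl) x
    have e2 := @Finset.sum_subtype ι ℝ _ (fun i => ¬ i ∈ E)
      (Subtype.fintype fun i => ¬ i ∈ E) Eᶜ (fun i => Finset.mem_compl) x
    constructor
    · rintro ⟨hpos, h1, h2⟩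
      exact ⟨⟨fun i => hpos i, by rw [← e1]; exact h1⟩, ⟨fun i => hpos i, by rw [← e2]; exact h2⟩⟩
    · rintro ⟨⟨hp1, h1⟩, ⟨hp2, h2⟩⟩
      refine ⟨fun i => ?_, by rw [e1]; exact h1, by rw [e2]; exact h2⟩
      by_cases hi : i ∈ E
      · exact hp1 ⟨i, hi⟩
      · exact hp2 ⟨i, hi⟩
  rw [hset, hmp.measure_preimage
    (((@measurableSet_simp0 {i : ι // i ∈ E} (Subtype.fintype fun i => i ∈ E) _).prod
      (@measurableSet_simp0 {i : ι // ¬ i ∈ E} (Subtype.fintype fun i => ¬ i ∈ E) _)).nullMeasurableSet)]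
  rw [Measure.volume_eq_prod, Measure.prod_prod]
  have hA := @volume_simp0 {i : ι // i ∈ E} (Subtype.fintype fun i => i ∈ E) _
  have hB := @volume_simp0 {i : ι // ¬ i ∈ E} (Subtype.fintype fun i => ¬ i ∈ E) _
  rw [Fintype.card_coe] at hA
  rw [Fintype.card_subtype_compl, Fintype.card_coe] at hB
  exact congrArg₂ (· * ·) hA hB

lemma volume_Dset :
    volume (Dset ι) = ENNReal.ofReal
      (((2 * Fintype.card ι).factorial : ℝ) / ((Fintype.card ι).factorial : ℝ) ^ 3) := by
  classical
  set n := Fintype.card ι with hn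
  have hdec := volume_eq_sum_orth (ι := ι) (measurableSet_Dset (ι := ι))
  have hpiece : ∀ E : Finset ι,
      volume (Dset ι ∩ orth E) = ENNReal.ofReal (1 / (E.card).factorial) *
        ENNReal.ofReal (1 / (n - E.card).factorial) := by
    intro E
    have hpre : refl E ⁻¹' (Dset ι ∩ orth E) =
        {x : ι → ℝ | (∀ i, 0 < x i) ∧ (∑ i ∈ E, x i ≤ 1) ∧ (∑ i ∈ Eᶜ, x i ≤ 1)} := by
      ext x
      simp only [Set.mem_preimage, Set.mem_inter_iff, Set.mem_setOf_eq, Dset]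
      constructor
      · rintro ⟨⟨h1, h2⟩, horth⟩
        have hpos : ∀ i, 0 < x i := refl_mem_orth.mp horth
        refine ⟨hpos, ?_, ?_⟩
        · calc ∑ i ∈ E, x i = ∑ i, max (refl E x i) 0 := by
                rw [show (∑ i, max (refl E x i) 0) = ∑ i, if i ∈ E then x i else 0 from
                  Finset.sum_congr rfl fun i _ => by
                    by_cases hi : i ∈ E <;>
                      simp [refl, hi, max_eq_left (hpos i).le, max_eq_right (neg_nonpos.mpr (hpos i).le)]]
                rw [Finset.sum_ite_mem, Finset.univ_inter]
            _ ≤ 1 := h1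
        · calc ∑ i ∈ Eᶜ, x i = ∑ i, max (-refl E x i) 0 := by
                rw [show (∑ i, max (-refl E x i) 0) = ∑ i, if i ∈ Eᶜ then x i else 0 from
                  Finset.sum_congr rfl fun i _ => by
                    by_cases hi : i ∈ E <;>
                      simp [refl, hi, max_eq_left (hpos i).le, max_eq_right (neg_nonpos.mpr (hpos i).le)]]
                rw [Finset.sum_ite_mem, Finset.univ_inter]
            _ ≤ 1 := h2
      · rintro ⟨hpos, h1, h2⟩
        refine ⟨⟨?_, ?_⟩, refl_mem_orth.mpr hpos⟩
        · rw [show (∑ i, max (refl E x i) 0) = ∑ i, if i ∈ E then x i else 0 from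
              Finset.sum_congr rfl fun i _ => by
                by_cases hi : i ∈ E <;>
                  simp [refl, hi, max_eq_left (hpos i).le, max_eq_right (neg_nonpos.mpr (hpos i).le)]]
          rw [Finset.sum_ite_mem, Finset.univ_inter]
          exact h1
        · rw [show (∑ i, max (-refl E x i) 0) = ∑ i, if i ∈ Eᶜ then x i else 0 from
              Finset.sum_congr rfl fun i _ => by
                by_cases hi : i ∈ E <;>
                  simp [refl, hi, max_eq_left (hpos i).le, max_eq_right (neg_nonpos.mpr (hpos i).le)]]
          rw [Finset.sum_ite_mem, Finset.univ_inter]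
          exact h2
    rw [← (measurePreserving_refl E).measure_preimage
      ((measurableSet_Dset.inter (measurableSet_orth E)).nullMeasurableSet), hpre, volume_PE]
  rw [hdec, Finset.sum_congr rfl fun E _ => hpiece E]
  have hcomb : ∀ E : Finset ι, ENNReal.ofReal (1 / (E.card).factorial) *
      ENNReal.ofReal (1 / (n - E.card).factorial) =
        ENNReal.ofReal ((1 : ℝ)/(E.card).factorial * (1/(n - E.card).factorial)) := by
    intro E
    rw [ENNReal.ofReal_mul (by positivity)]
  rw [Finset.sum_congr rfl fun E _ => hcomb E]
  rw [← ENNReal.ofReal_sum_of_nonneg (fun E _ => by positivity)]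
  congr 1
  have : ∑ E : Finset ι, ((1 : ℝ)/(E.card).factorial * (1/(n - E.card).factorial)) =
      ∑ E ∈ (Finset.univ : Finset ι).powerset,
        ((1 : ℝ)/(E.card).factorial * (1/(n - E.card).factorial)) := by
    rw [Finset.powerset_univ]
  rw [this, Finset.sum_powerset_apply_card
    (fun j => (1 : ℝ)/(j).factorial * (1/(n - j).factorial)), Finset.card_univ, ← hn]
  exact sum_real_id n

end AV


/-- The generalized Schinzel norm attached to a partition `T 0, …, T (L-1)` of a finite set `S`:
`∇(x) = Σ_ℓ ((1/2)|Σ_{s ∈ T ℓ} x s| + (1/2) Σ_{s ∈ T ℓ} |x s|)`. -/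
noncomputable def nabla {S : Type*} [Fintype S] {L : ℕ} (T : Fin L → Finset S)
    (x : S → ℝ) : ℝ :=
  ∑ ℓ, ((1 / 2 : ℝ) * |∑ s ∈ T ℓ, x s| + (1 / 2 : ℝ) * ∑ s ∈ T ℓ, |x s|)

/-- **(Akhtari–Vaaler, Section 7).**  Let `S` be a finite nonempty set partitioned into nonempty
disjoint subsets `T_1, …, T_L`.  Then the generalized Schinzel norm `∇` is a norm on `ℝ^S` and
its closed unit ball `K_∇` satisfies `2^{|S|}/|S|! ≤ Vol(K_∇) ≤ (2|S|)!/(|S|!)^3`. -/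
theorem nabla_norm_and_volume (S : Type*) [Fintype S] [Nonempty S]
    (L : ℕ) (T : Fin L → Finset S)
    (hne : ∀ ℓ, (T ℓ).Nonempty)
    (hdisj : ∀ i j, i ≠ j → Disjoint (T i) (T j))
    (hcover : ∀ s : S, ∃ ℓ, s ∈ T ℓ) :
    (∀ x : S → ℝ, 0 ≤ nabla T x) ∧
      (∀ x : S → ℝ, nabla T x = 0 ↔ x = 0) ∧
      (∀ (r : ℝ) (x : S → ℝ), nabla T (r • x) = |r| * nabla T x) ∧
      (∀ x y : S → ℝ, nabla T (x + y) ≤ nabla T x + nabla T y) ∧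
      ENNReal.ofReal ((2 : ℝ) ^ (Fintype.card S) / (Fintype.card S).factorial) ≤
        MeasureTheory.volume {x : S → ℝ | nabla T x ≤ 1} ∧
      MeasureTheory.volume {x : S → ℝ | nabla T x ≤ 1} ≤
        ENNReal.ofReal
          (((2 * Fintype.card S).factorial : ℝ) / ((Fintype.card S).factorial : ℝ) ^ 3) := by
  classical
  have hpart : ∀ f : S → ℝ, ∑ s, f s = ∑ ℓ, ∑ s ∈ T ℓ, f s := by
    intro f
    have hU : (Finset.univ : Finset S) = Finset.univ.biUnion T := by
      ext s
      simp only [Finset.mem_univ, true_iff, Finset.mem_biUnion]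
      obtain ⟨ℓ, hℓ⟩ := hcover s
      exact ⟨ℓ, by simp, hℓ⟩
    rw [hU, Finset.sum_biUnion (fun i _ j _ hij => hdisj i j hij)]
  have htermnn : ∀ (x : S → ℝ) (ℓ : Fin L),
      0 ≤ (1 / 2 : ℝ) * |∑ s ∈ T ℓ, x s| + (1 / 2 : ℝ) * ∑ s ∈ T ℓ, |x s| := by
    intro x ℓ
    have h1 := abs_nonneg (∑ s ∈ T ℓ, x s)
    have h2 : (0:ℝ) ≤ ∑ s ∈ T ℓ, |x s| := Finset.sum_nonneg fun s _ => abs_nonneg _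
    linarith
  have hnonneg : ∀ x : S → ℝ, 0 ≤ nabla T x := fun x =>
    Finset.sum_nonneg fun ℓ _ => htermnn x ℓ
  have hmax : ∀ a : ℝ, max a 0 = (a + |a|)/2 := by
    intro a
    rcases le_total 0 a with h | h
    · rw [max_eq_left h, abs_of_nonneg h]; ring
    · rw [max_eq_right h, abs_of_nonpos h]; ring
  have hmaxneg : ∀ a : ℝ, max (-a) 0 = (|a| - a)/2 := by
    intro a
    rw [hmax, abs_neg]; ring
  refine ⟨hnonneg, ?_, ?_, ?_, ?_, ?_⟩
  · -- definiteness
    intro x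
    constructor
    · intro hx
      funext s
      obtain ⟨ℓ, hs⟩ := hcover s
      have hterm := (Finset.sum_eq_zero_iff_of_nonneg
        (fun ℓ _ => htermnn x ℓ)).mp hx ℓ (Finset.mem_univ ℓ)
      have h1 := abs_nonneg (∑ t ∈ T ℓ, x t)
      have h2 : (0:ℝ) ≤ ∑ t ∈ T ℓ, |x t| := Finset.sum_nonneg fun t _ => abs_nonneg _
      have h3 : ∑ t ∈ T ℓ, |x t| = 0 := by linarith
      have := (Finset.sum_eq_zero_iff_of_nonneg (fun t _ => abs_nonneg (x t))).mp h3 s hs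
      simpa using abs_eq_zero.mp this
    · rintro rfl
      simp [nabla]
  · -- homogeneity
    intro r x
    unfold nabla
    rw [Finset.mul_sum]
    refine Finset.sum_congr rfl fun ℓ _ => ?_
    simp only [Pi.smul_apply, smul_eq_mul]
    rw [← Finset.mul_sum, abs_mul]
    have habs : ∑ s ∈ T ℓ, |r * x s| = |r| * ∑ s ∈ T ℓ, |x s| := by
      rw [Finset.mul_sum]
      exact Finset.sum_congr rfl fun s _ => abs_mul r (x s)
    rw [habs]
    ring
  · -- triangle
    intro x y
    unfold nabla
    rw [← Finset.sum_add_distrib]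
    refine Finset.sum_le_sum fun ℓ _ => ?_
    simp only [Pi.add_apply]
    have h1 : |∑ s ∈ T ℓ, (x s + y s)| ≤ |∑ s ∈ T ℓ, x s| + |∑ s ∈ T ℓ, y s| := by
      rw [Finset.sum_add_distrib]
      exact abs_add_le _ _
    have h2 : ∑ s ∈ T ℓ, |x s + y s| ≤ ∑ s ∈ T ℓ, |x s| + ∑ s ∈ T ℓ, |y s| := by
      rw [← Finset.sum_add_distrib]
      exact Finset.sum_le_sum fun s _ => abs_add_le _ _
    linarith
  · -- lower volume bound
    have hlow : {x : S → ℝ | ∑ s, |x s| ≤ 1} ⊆ {x : S → ℝ | nabla T x ≤ 1} := by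
      intro x hx
      simp only [Set.mem_setOf_eq] at hx ⊢
      calc nabla T x ≤ ∑ ℓ, ∑ s ∈ T ℓ, |x s| := by
            refine Finset.sum_le_sum fun ℓ _ => ?_
            have := Finset.abs_sum_le_sum_abs (fun s => x s) (T ℓ)
            linarith
        _ = ∑ s, |x s| := (hpart _).symm
        _ ≤ 1 := hx
    have hlb := measure_mono (μ := (volume : Measure (S → ℝ))) hlow
    rwa [AV.volume_l1ball] at hlb
  · -- upper volume bound
    have hup : {x : S → ℝ | nabla T x ≤ 1} ⊆ AV.Dset S := by
      intro x hx
      simp only [Set.mem_setOf_eq] at hx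
      have hblock : ∀ ℓ : Fin L,
          (∑ s ∈ T ℓ, max (x s) 0 ≤
            (1 / 2 : ℝ) * |∑ s ∈ T ℓ, x s| + (1 / 2 : ℝ) * ∑ s ∈ T ℓ, |x s|) ∧
          (∑ s ∈ T ℓ, max (-x s) 0 ≤
            (1 / 2 : ℝ) * |∑ s ∈ T ℓ, x s| + (1 / 2 : ℝ) * ∑ s ∈ T ℓ, |x s|) := by
        intro ℓ
        have e1 : ∑ s ∈ T ℓ, max (x s) 0 =
            ((∑ s ∈ T ℓ, x s) + ∑ s ∈ T ℓ, |x s|)/2 := by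
          rw [Finset.sum_congr rfl fun s _ => hmax (x s), ← Finset.sum_div,
            Finset.sum_add_distrib]
        have e2 : ∑ s ∈ T ℓ, max (-x s) 0 =
            ((∑ s ∈ T ℓ, |x s|) - ∑ s ∈ T ℓ, x s)/2 := by
          rw [Finset.sum_congr rfl fun s _ => hmaxneg (x s), ← Finset.sum_div,
            Finset.sum_sub_distrib]
        have h1 := le_abs_self (∑ s ∈ T ℓ, x s)
        have h2 := neg_abs_le (∑ s ∈ T ℓ, x s)
        constructor
        · rw [e1]; linarith
        · rw [e2]; linarith
      constructor
      · calc ∑ s, max (x s) 0 = ∑ ℓ, ∑ s ∈ T ℓ, max (x s) 0 := hpart _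
          _ ≤ nabla T x := Finset.sum_le_sum fun ℓ _ => (hblock ℓ).1
          _ ≤ 1 := hx
      · calc ∑ s, max (-x s) 0 = ∑ ℓ, ∑ s ∈ T ℓ, max (-x s) 0 := hpart _
          _ ≤ nabla T x := Finset.sum_le_sum fun ℓ _ => (hblock ℓ).2
          _ ≤ 1 := hx
    have hub := measure_mono (μ := (volume : Measure (S → ℝ))) hup
    rwa [AV.volume_Dset] at hub
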